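/- For every k ≥ 2, the k-uniform hypergraph H_{k,2} with vertex set {a, b, c, u_1, …, u_{k−1}, v_1, …, v_{k−1}} (2k+1 vertices) and edge set {{a,u_1,…,u_{k−1}}, {b,u_1,…,u_{k−1}}, {b,v_1,…,v_{k−1}}, {c,v_1,…,v_{k−1}}} satisfies γ_g(H_{k,2}) = γ_g'(H_{k,2}) = 3. -/

import Mathlib

attribute [local instance 10] Classical.propDecidable

variable {V : Type}

/-- The closed neighborhood of a vertex in a hypergraph given by its edge set. -/
noncomputable def closedNbhd [Fintype V] (H : Finset (Finset V)) (v : V) : Finset V :=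
  Finset.univ.filter (fun u => u = v ∨ ∃ e ∈ H, u ∈ e ∧ v ∈ e)

private lemma card_sdiff_union_lt [Fintype V] {S T : Finset V} (h : ¬ T ⊆ S) :
    (Finset.univ \ (S ∪ T)).card < (Finset.univ \ S).card := by
  classical
  obtain ⟨u, huT, huS⟩ := Finset.not_subset.mp h
  apply Finset.card_lt_card
  rw [Finset.ssubset_def]
  constructor
  · exact Finset.sdiff_subset_sdiff (Finset.Subset.refl _) Finset.subset_union_left
  · intro hc
    have hu : u ∈ Finset.univ \ S := by simp [huS]
    have := hc hu
    simp [huT] at this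

/-- Value of the domination game on a hypergraph: `S` is the set of vertices already
dominated, `dom = true` iff Dominator is the next player to move.  A legal move is a vertex
dominating at least one new vertex; Dominator minimizes, Staller maximizes the total
number of moves, and both play optimally. -/
noncomputable def domGameVal [Fintype V] (H : Finset (Finset V)) (dom : Bool) (S : Finset V) :
    ℕ :=
  if h : (Finset.univ.filter fun v => ¬ closedNbhd H v ⊆ S).Nonempty then
    1 + (if dom then
        (Finset.univ.filter fun v => ¬ closedNbhd H v ⊆ S).attach.inf'
          (Finset.attach_nonempty_iff.mpr h)
          (fun v => domGameVal H false (S ∪ closedNbhd H v.1))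
      else
        (Finset.univ.filter fun v => ¬ closedNbhd H v ⊆ S).attach.sup'
          (Finset.attach_nonempty_iff.mpr h)
          (fun v => domGameVal H true (S ∪ closedNbhd H v.1)))
  else 0
termination_by (Finset.univ \ S).card
decreasing_by
  · exact card_sdiff_union_lt (Finset.mem_filter.mp v.2).2
  · exact card_sdiff_union_lt (Finset.mem_filter.mp v.2).2

/-- The game domination number (Dominator starts). -/
noncomputable def gammaGame [Fintype V] (H : Finset (Finset V)) : ℕ :=
  domGameVal H true ∅

/-- The Staller-start game domination number. -/
noncomputable def gammaGame' [Fintype V] (H : Finset (Finset V)) : ℕ :=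
  domGameVal H false ∅

/-- The hypergraph `H_{k,2}` on `2k+1` vertices encoded as `Fin (2k+1)`:
`a = 0`, `b = 1`, `c = 2`, `u_1, …, u_{k-1}` are `3, …, k+1` and `v_1, …, v_{k-1}` are
`k+2, …, 2k`.  Its edges are `{a} ∪ U`, `{b} ∪ U`, `{b} ∪ W`, `{c} ∪ W`, where
`U = {u_1,…,u_{k-1}}` and `W = {v_1,…,v_{k-1}}`. -/
noncomputable def Hk2 (k : ℕ) : Finset (Finset (Fin (2 * k + 1))) :=
  {insert 0 (Finset.univ.filter (fun x : Fin (2 * k + 1) => 3 ≤ (x : ℕ) ∧ (x : ℕ) ≤ k + 1)),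
   insert 1 (Finset.univ.filter (fun x : Fin (2 * k + 1) => 3 ≤ (x : ℕ) ∧ (x : ℕ) ≤ k + 1)),
   insert 1 (Finset.univ.filter (fun x : Fin (2 * k + 1) => k + 2 ≤ (x : ℕ))),
   insert 2 (Finset.univ.filter (fun x : Fin (2 * k + 1) => k + 2 ≤ (x : ℕ)))}

/-! ### Auxiliary general lemmas about the game value -/

section GameLemmas
variable [Fintype V] (H : Finset (Finset V))

private lemma self_mem_closedNbhd (v : V) : v ∈ closedNbhd H v := by
  simp [closedNbhd]

private lemma not_nbhd_subset_empty (v : V) : ¬ closedNbhd H v ⊆ (∅ : Finset V) := by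
  intro h
  simpa using h (self_mem_closedNbhd H v)

private lemma exists_legal_of_ne_univ {S : Finset V} (h : S ≠ Finset.univ) :
    ∃ v, ¬ closedNbhd H v ⊆ S := by
  by_contra hc
  push_neg at hc
  apply h
  apply Finset.eq_univ_of_forall
  intro v
  exact hc v (self_mem_closedNbhd H v)

private lemma legal_filter_nonempty {S : Finset V} {v : V} (hv : ¬ closedNbhd H v ⊆ S) :
    (Finset.univ.filter fun w => ¬ closedNbhd H w ⊆ S).Nonempty :=
  ⟨v, by simp [hv]⟩

private lemma domGameVal_univ (dom : Bool) : domGameVal H dom Finset.univ = 0 := by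
  rw [domGameVal]
  simp

private lemma one_le_domGameVal {S : Finset V} (dom : Bool) (h : S ≠ Finset.univ) :
    1 ≤ domGameVal H dom S := by
  obtain ⟨v, hv⟩ := exists_legal_of_ne_univ H h
  rw [domGameVal, dif_pos (legal_filter_nonempty H hv)]
  omega

private lemma domGameVal_true_le {S : Finset V} {v : V} {n : ℕ} (hv : ¬ closedNbhd H v ⊆ S)
    (h : domGameVal H false (S ∪ closedNbhd H v) ≤ n) :
    domGameVal H true S ≤ n + 1 := by
  rw [domGameVal, dif_pos (legal_filter_nonempty H hv)]
  simp only [if_true]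
  have hm : (⟨v, by simp [hv]⟩ : {x // x ∈ Finset.univ.filter fun w => ¬ closedNbhd H w ⊆ S}) ∈
      (Finset.univ.filter fun w => ¬ closedNbhd H w ⊆ S).attach := Finset.mem_attach _ _
  have h3 : _ ≤ domGameVal H false (S ∪ closedNbhd H v) := Finset.inf'_le
    (f := fun w : {x // x ∈ Finset.univ.filter fun w => ¬ closedNbhd H w ⊆ S}
      => domGameVal H false (S ∪ closedNbhd H w.1)) hm
  omega

private lemma le_domGameVal_true {S : Finset V} {n : ℕ} (hS : S ≠ Finset.univ)
    (h : ∀ v, ¬ closedNbhd H v ⊆ S → n ≤ domGameVal H false (S ∪ closedNbhd H v)) :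
    n + 1 ≤ domGameVal H true S := by
  obtain ⟨v, hv⟩ := exists_legal_of_ne_univ H hS
  rw [domGameVal, dif_pos (legal_filter_nonempty H hv)]
  simp only [if_true]
  have := Finset.le_inf' (Finset.attach_nonempty_iff.mpr (legal_filter_nonempty H hv))
    (fun w : {x // x ∈ Finset.univ.filter fun w => ¬ closedNbhd H w ⊆ S}
      => domGameVal H false (S ∪ closedNbhd H w.1)) (fun w _ =>
        h w.1 (Finset.mem_filter.mp w.2).2)
  omega

private lemma domGameVal_false_le {S : Finset V} {n : ℕ}
    (h : ∀ v, ¬ closedNbhd H v ⊆ S → domGameVal H true (S ∪ closedNbhd H v) ≤ n) :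
    domGameVal H false S ≤ n + 1 := by
  rw [domGameVal]
  split
  · next hne =>
    simp only [Bool.false_eq_true, if_false]
    have := Finset.sup'_le (Finset.attach_nonempty_iff.mpr hne)
      (fun w : {x // x ∈ Finset.univ.filter fun w => ¬ closedNbhd H w ⊆ S}
        => domGameVal H true (S ∪ closedNbhd H w.1)) (fun w _ =>
          h w.1 (Finset.mem_filter.mp w.2).2)
    omega
  · omega

private lemma le_domGameVal_false {S : Finset V} {v : V} {n : ℕ} (hv : ¬ closedNbhd H v ⊆ S)
    (h : n ≤ domGameVal H true (S ∪ closedNbhd H v)) :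
    n + 1 ≤ domGameVal H false S := by
  rw [domGameVal, dif_pos (legal_filter_nonempty H hv)]
  simp only [Bool.false_eq_true, if_false]
  have hm : (⟨v, by simp [hv]⟩ : {x // x ∈ Finset.univ.filter fun w => ¬ closedNbhd H w ⊆ S}) ∈
      (Finset.univ.filter fun w => ¬ closedNbhd H w ⊆ S).attach := Finset.mem_attach _ _
  have h3 : domGameVal H true (S ∪ closedNbhd H v) ≤ _ := Finset.le_sup'
    (f := fun w : {x // x ∈ Finset.univ.filter fun w => ¬ closedNbhd H w ⊆ S}
      => domGameVal H true (S ∪ closedNbhd H w.1)) hm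
  omega

end GameLemmas

/-! ### Auxiliary lemmas about `Hk2` -/

private lemma val1' (k : ℕ) (hk : 2 ≤ k) : ((1 : Fin (2*k+1)) : ℕ) = 1 := by
  rw [Fin.val_one', Nat.mod_eq_of_lt (by omega)]

private lemma val2' (k : ℕ) (hk : 2 ≤ k) : ((2 : Fin (2*k+1)) : ℕ) = 2 := by
  show (Fin.ofNat (2*k+1) 2).val = 2
  simp [Fin.ofNat, Nat.mod_eq_of_lt (show 2 < 2*k+1 by omega)]

private lemma mem_nbhd (k : ℕ) (hk : 2 ≤ k) (v x : Fin (2*k+1)) :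
    x ∈ closedNbhd (Hk2 k) v ↔ (x : ℕ) = (v : ℕ) ∨
      (((v:ℕ) = 0 ∨ (3 ≤ (v:ℕ) ∧ (v:ℕ) ≤ k+1)) ∧ ((x:ℕ) = 0 ∨ (3 ≤ (x:ℕ) ∧ (x:ℕ) ≤ k+1))) ∨
      (((v:ℕ) = 1 ∨ (3 ≤ (v:ℕ) ∧ (v:ℕ) ≤ k+1)) ∧ ((x:ℕ) = 1 ∨ (3 ≤ (x:ℕ) ∧ (x:ℕ) ≤ k+1))) ∨
      (((v:ℕ) = 1 ∨ k+2 ≤ (v:ℕ)) ∧ ((x:ℕ) = 1 ∨ k+2 ≤ (x:ℕ))) ∨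
      (((v:ℕ) = 2 ∨ k+2 ≤ (v:ℕ)) ∧ ((x:ℕ) = 2 ∨ k+2 ≤ (x:ℕ))) := by
  simp only [closedNbhd, Hk2, Finset.mem_filter, Finset.mem_univ, true_and,
    Finset.mem_insert, Finset.mem_singleton, Fin.ext_iff, Fin.val_zero, val1' k hk, val2' k hk,
    exists_eq_or_imp, exists_eq_left]
  omega

/-- Vertex subsets of `Hk2` described by a predicate on values. -/
private noncomputable def FS (k : ℕ) (p : ℕ → Prop) : Finset (Fin (2*k+1)) :=
  Finset.univ.filter fun x => p (x : ℕ)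

private lemma mem_FS {k : ℕ} {p : ℕ → Prop} {x : Fin (2*k+1)} : x ∈ FS k p ↔ p (x : ℕ) := by
  simp [FS]

private lemma union_FS {k : ℕ} {inst : DecidableEq (Fin (2*k+1))} {p q r : ℕ → Prop}
    (h : ∀ x < 2*k+1, (p x ∨ q x ↔ r x)) :
    @Union.union _ (@Finset.instUnion _ inst) (FS k p) (FS k q) = FS k r := by
  ext x
  rw [@Finset.mem_union _ inst]
  simp only [FS, Finset.mem_filter, Finset.mem_univ, true_and]
  exact h _ x.isLt

private lemma union_FS_univ {k : ℕ} {inst : DecidableEq (Fin (2*k+1))} {p q : ℕ → Prop}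
    (h : ∀ x < 2*k+1, p x ∨ q x) :
    @Union.union _ (@Finset.instUnion _ inst) (FS k p) (FS k q) = Finset.univ := by
  apply Finset.eq_univ_of_forall
  intro x
  rw [@Finset.mem_union _ inst]
  simp only [FS, Finset.mem_filter, Finset.mem_univ, true_and]
  exact h _ x.isLt

private lemma empty_union' {α : Type} {inst : DecidableEq α} (s : Finset α) :
    @Union.union _ (@Finset.instUnion _ inst) ∅ s = s := by
  ext x
  rw [@Finset.mem_union _ inst]
  simp

private lemma not_subset_FS {k : ℕ} {p q : ℕ → Prop} (x : Fin (2*k+1)) (h1 : p (x:ℕ))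
    (h2 : ¬ q (x:ℕ)) : ¬ FS k p ⊆ FS k q := by
  intro h
  exact h2 (mem_FS.mp (h (mem_FS.mpr h1)))

private lemma FS_subset {k : ℕ} {p q : ℕ → Prop} (h : ∀ x < 2*k+1, p x → q x) :
    FS k p ⊆ FS k q := by
  intro x hx
  exact mem_FS.mpr (h _ x.isLt (mem_FS.mp hx))

private lemma FS_eq_univ {k : ℕ} {p : ℕ → Prop} (h : ∀ x < 2*k+1, p x) :
    FS k p = Finset.univ :=
  Finset.eq_univ_of_forall fun x => mem_FS.mpr (h _ x.isLt)

private lemma FS_ne_univ {k : ℕ} {p : ℕ → Prop} (x : Fin (2*k+1)) (h : ¬ p (x:ℕ)) :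
    FS k p ≠ Finset.univ := by
  intro he
  exact h (mem_FS.mp (he ▸ Finset.mem_univ x))

private lemma empty_ne_univ' (k : ℕ) : (∅ : Finset (Fin (2*k+1))) ≠ Finset.univ := by
  intro h
  have : (⟨0, by omega⟩ : Fin (2*k+1)) ∈ (∅ : Finset (Fin (2*k+1))) := by
    rw [h]; exact Finset.mem_univ _
  simp at this

/-! Classification of the closed neighborhoods in `Hk2 k`. -/

private lemma nbhd0 {k : ℕ} (hk : 2 ≤ k) {v : Fin (2*k+1)} (hv : (v:ℕ) = 0) :
    closedNbhd (Hk2 k) v = FS k (fun x => x = 0 ∨ (3 ≤ x ∧ x ≤ k+1)) := by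
  ext x
  rw [mem_nbhd k hk, mem_FS]
  omega

private lemma nbhd1 {k : ℕ} (hk : 2 ≤ k) {v : Fin (2*k+1)} (hv : (v:ℕ) = 1) :
    closedNbhd (Hk2 k) v = FS k (fun x => x = 1 ∨ 3 ≤ x) := by
  ext x
  rw [mem_nbhd k hk, mem_FS]
  omega

private lemma nbhd2 {k : ℕ} (hk : 2 ≤ k) {v : Fin (2*k+1)} (hv : (v:ℕ) = 2) :
    closedNbhd (Hk2 k) v = FS k (fun x => x = 2 ∨ k+2 ≤ x) := by
  ext x
  rw [mem_nbhd k hk, mem_FS]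
  omega

private lemma nbhdU {k : ℕ} (hk : 2 ≤ k) {v : Fin (2*k+1)}
    (hv : 3 ≤ (v:ℕ) ∧ (v:ℕ) ≤ k+1) :
    closedNbhd (Hk2 k) v = FS k (fun x => x ≤ 1 ∨ (3 ≤ x ∧ x ≤ k+1)) := by
  ext x
  rw [mem_nbhd k hk, mem_FS]
  omega

private lemma nbhdW {k : ℕ} (hk : 2 ≤ k) {v : Fin (2*k+1)} (hv : k+2 ≤ (v:ℕ)) :
    closedNbhd (Hk2 k) v = FS k (fun x => x = 1 ∨ x = 2 ∨ k+2 ≤ x) := by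
  ext x
  rw [mem_nbhd k hk, mem_FS]
  have := v.isLt
  omega

/-- for every `k ≥ 2`, `γ_g(H_{k,2}) = γ_g'(H_{k,2}) = 3`. -/
theorem stmt_18 (k : ℕ) (hk : 2 ≤ k) :
    gammaGame (Hk2 k) = 3 ∧ gammaGame' (Hk2 k) = 3 := by
  set H := Hk2 k with hH
  have hcase : ∀ v : Fin (2*k+1), (v:ℕ) = 0 ∨ (v:ℕ) = 1 ∨ (v:ℕ) = 2 ∨
      (3 ≤ (v:ℕ) ∧ (v:ℕ) ≤ k+1) ∨ k+2 ≤ (v:ℕ) := by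
    intro v
    have := v.isLt
    omega
  constructor
  · -- Dominator-start game has value 3
    apply le_antisymm
    · -- upper bound: Dominator first plays u₁ = vertex 3
      have hu : ¬ closedNbhd H (⟨3, by omega⟩ : Fin (2*k+1)) ⊆ ∅ :=
        not_nbhd_subset_empty H _
      apply domGameVal_true_le H hu
      rw [empty_union', nbhdU hk (v := ⟨3, by omega⟩) (by (try simp [Fin.val_mk]) <;> omega)]
      apply domGameVal_false_le H
      intro v hv
      rcases hcase v with h0 | h1 | h2 | hU | hW
      · rw [nbhd0 hk h0] at hv
        exact absurd (FS_subset (fun x _ h => by omega)) hv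
      · -- Staller plays b; Dominator answers with c
        rw [nbhd1 hk h1, union_FS (r := fun x => x ≠ 2) (by intro x hx; omega)]
        have hc : ¬ closedNbhd H (⟨2, by omega⟩ : Fin (2*k+1)) ⊆ FS k (fun x => x ≠ 2) := by
          rw [nbhd2 hk (v := ⟨2, by omega⟩) rfl]
          refine not_subset_FS (⟨2, by omega⟩ : Fin (2*k+1)) ?_ ?_ <;>
            (try simp [Fin.val_mk]) <;> omega
        apply domGameVal_true_le H hc
        rw [nbhd2 hk (v := ⟨2, by omega⟩) rfl, union_FS_univ (by intro x hx; omega), domGameVal_univ]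
      · rw [nbhd2 hk h2, union_FS_univ (by intro x hx; omega), domGameVal_univ]
        omega
      · rw [nbhdU hk hU] at hv
        exact absurd (FS_subset (fun x _ h => by omega)) hv
      · rw [nbhdW hk hW, union_FS_univ (by intro x hx; omega), domGameVal_univ]
        omega
    · -- lower bound 3 ≤ γ_g
      apply le_domGameVal_true H (empty_ne_univ' k)
      intro v hv
      rw [empty_union']
      rcases hcase v with h0 | h1 | h2 | hU | hW
      · rw [nbhd0 hk h0]
        have hb : ¬ closedNbhd H (⟨1, by omega⟩ : Fin (2*k+1)) ⊆
            FS k (fun x => x = 0 ∨ (3 ≤ x ∧ x ≤ k+1)) := by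
          rw [nbhd1 hk (v := ⟨1, by omega⟩) rfl]
          refine not_subset_FS (⟨1, by omega⟩ : Fin (2*k+1)) ?_ ?_ <;>
            (try simp [Fin.val_mk]) <;> omega
        apply le_domGameVal_false H hb
        rw [nbhd1 hk (v := ⟨1, by omega⟩) rfl, union_FS (r := fun x => x ≠ 2) (by intro x hx; omega)]
        refine one_le_domGameVal H true (FS_ne_univ (⟨2, by omega⟩ : Fin (2*k+1)) ?_)
        (try simp [Fin.val_mk]) <;> omega
      · rw [nbhd1 hk h1]
        have ha : ¬ closedNbhd H (⟨0, by omega⟩ : Fin (2*k+1)) ⊆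
            FS k (fun x => x = 1 ∨ 3 ≤ x) := by
          rw [nbhd0 hk (v := ⟨0, by omega⟩) rfl]
          refine not_subset_FS (⟨0, by omega⟩ : Fin (2*k+1)) ?_ ?_ <;>
            (try simp [Fin.val_mk]) <;> omega
        apply le_domGameVal_false H ha
        rw [nbhd0 hk (v := ⟨0, by omega⟩) rfl, union_FS (r := fun x => x ≠ 2) (by intro x hx; omega)]
        refine one_le_domGameVal H true (FS_ne_univ (⟨2, by omega⟩ : Fin (2*k+1)) ?_)
        (try simp [Fin.val_mk]) <;> omega
      · rw [nbhd2 hk h2]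
        have hb : ¬ closedNbhd H (⟨1, by omega⟩ : Fin (2*k+1)) ⊆
            FS k (fun x => x = 2 ∨ k+2 ≤ x) := by
          rw [nbhd1 hk (v := ⟨1, by omega⟩) rfl]
          refine not_subset_FS (⟨3, by omega⟩ : Fin (2*k+1)) ?_ ?_ <;>
            (try simp [Fin.val_mk]) <;> omega
        apply le_domGameVal_false H hb
        rw [nbhd1 hk (v := ⟨1, by omega⟩) rfl, union_FS (r := fun x => x ≠ 0) (by intro x hx; omega)]
        refine one_le_domGameVal H true (FS_ne_univ (⟨0, by omega⟩ : Fin (2*k+1)) ?_)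
        (try simp [Fin.val_mk]) <;> omega
      · rw [nbhdU hk hU]
        have hb : ¬ closedNbhd H (⟨1, by omega⟩ : Fin (2*k+1)) ⊆
            FS k (fun x => x ≤ 1 ∨ (3 ≤ x ∧ x ≤ k+1)) := by
          rw [nbhd1 hk (v := ⟨1, by omega⟩) rfl]
          refine not_subset_FS (⟨k+2, by omega⟩ : Fin (2*k+1)) ?_ ?_ <;>
            (try simp [Fin.val_mk]) <;> omega
        apply le_domGameVal_false H hb
        rw [nbhd1 hk (v := ⟨1, by omega⟩) rfl, union_FS (r := fun x => x ≠ 2) (by intro x hx; omega)]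
        refine one_le_domGameVal H true (FS_ne_univ (⟨2, by omega⟩ : Fin (2*k+1)) ?_)
        (try simp [Fin.val_mk]) <;> omega
      · rw [nbhdW hk hW]
        have hb : ¬ closedNbhd H (⟨1, by omega⟩ : Fin (2*k+1)) ⊆
            FS k (fun x => x = 1 ∨ x = 2 ∨ k+2 ≤ x) := by
          rw [nbhd1 hk (v := ⟨1, by omega⟩) rfl]
          refine not_subset_FS (⟨3, by omega⟩ : Fin (2*k+1)) ?_ ?_ <;>
            (try simp [Fin.val_mk]) <;> omega
        apply le_domGameVal_false H hb
        rw [nbhd1 hk (v := ⟨1, by omega⟩) rfl, union_FS (r := fun x => x ≠ 0) (by intro x hx; omega)]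
        refine one_le_domGameVal H true (FS_ne_univ (⟨0, by omega⟩ : Fin (2*k+1)) ?_)
        (try simp [Fin.val_mk]) <;> omega
  · -- Staller-start game has value 3
    apply le_antisymm
    · -- upper bound
      apply domGameVal_false_le H
      intro v hv
      rw [empty_union']
      rcases hcase v with h0 | h1 | h2 | hU | hW
      · -- Staller played a; Dominator answers with w₁ = k+2
        rw [nbhd0 hk h0]
        have hw : ¬ closedNbhd H (⟨k+2, by omega⟩ : Fin (2*k+1)) ⊆
            FS k (fun x => x = 0 ∨ (3 ≤ x ∧ x ≤ k+1)) := by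
          rw [nbhdW hk (v := ⟨k+2, by omega⟩) (by (try simp [Fin.val_mk]) <;> omega)]
          refine not_subset_FS (⟨k+2, by omega⟩ : Fin (2*k+1)) ?_ ?_ <;>
            (try simp [Fin.val_mk]) <;> omega
        apply domGameVal_true_le H hw
        rw [nbhdW hk (v := ⟨k+2, by omega⟩) (by (try simp [Fin.val_mk]) <;> omega),
          union_FS_univ (by intro x hx; omega), domGameVal_univ]
        omega
      · -- Staller played b; Dominator answers with a; then any Staller move finishes
        rw [nbhd1 hk h1]
        have ha : ¬ closedNbhd H (⟨0, by omega⟩ : Fin (2*k+1)) ⊆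
            FS k (fun x => x = 1 ∨ 3 ≤ x) := by
          rw [nbhd0 hk (v := ⟨0, by omega⟩) rfl]
          refine not_subset_FS (⟨0, by omega⟩ : Fin (2*k+1)) ?_ ?_ <;>
            (try simp [Fin.val_mk]) <;> omega
        apply domGameVal_true_le H ha
        rw [nbhd0 hk (v := ⟨0, by omega⟩) rfl, union_FS (r := fun x => x ≠ 2) (by intro x hx; omega)]
        apply domGameVal_false_le H
        intro z hz
        rcases hcase z with g0 | g1 | g2 | gU | gW
        · rw [nbhd0 hk g0] at hz
          exact absurd (FS_subset (fun x _ h => by omega)) hz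
        · rw [nbhd1 hk g1] at hz
          exact absurd (FS_subset (fun x _ h => by omega)) hz
        · rw [nbhd2 hk g2, union_FS_univ (by intro x hx; omega), domGameVal_univ]
        · rw [nbhdU hk gU] at hz
          exact absurd (FS_subset (fun x _ h => by omega)) hz
        · rw [nbhdW hk gW, union_FS_univ (by intro x hx; omega), domGameVal_univ]
      · -- Staller played c; Dominator answers with u₁ = 3
        rw [nbhd2 hk h2]
        have hu : ¬ closedNbhd H (⟨3, by omega⟩ : Fin (2*k+1)) ⊆
            FS k (fun x => x = 2 ∨ k+2 ≤ x) := by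
          rw [nbhdU hk (v := ⟨3, by omega⟩) (by (try simp [Fin.val_mk]) <;> omega)]
          refine not_subset_FS (⟨3, by omega⟩ : Fin (2*k+1)) ?_ ?_ <;>
            (try simp [Fin.val_mk]) <;> omega
        apply domGameVal_true_le H hu
        rw [nbhdU hk (v := ⟨3, by omega⟩) (by (try simp [Fin.val_mk]) <;> omega),
          union_FS_univ (by intro x hx; omega), domGameVal_univ]
        omega
      · rw [nbhdU hk hU]
        have hw : ¬ closedNbhd H (⟨k+2, by omega⟩ : Fin (2*k+1)) ⊆
            FS k (fun x => x ≤ 1 ∨ (3 ≤ x ∧ x ≤ k+1)) := by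
          rw [nbhdW hk (v := ⟨k+2, by omega⟩) (by (try simp [Fin.val_mk]) <;> omega)]
          refine not_subset_FS (⟨k+2, by omega⟩ : Fin (2*k+1)) ?_ ?_ <;>
            (try simp [Fin.val_mk]) <;> omega
        apply domGameVal_true_le H hw
        rw [nbhdW hk (v := ⟨k+2, by omega⟩) (by (try simp [Fin.val_mk]) <;> omega),
          union_FS_univ (by intro x hx; omega), domGameVal_univ]
        omega
      · rw [nbhdW hk hW]
        have hu : ¬ closedNbhd H (⟨3, by omega⟩ : Fin (2*k+1)) ⊆
            FS k (fun x => x = 1 ∨ x = 2 ∨ k+2 ≤ x) := by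
          rw [nbhdU hk (v := ⟨3, by omega⟩) (by (try simp [Fin.val_mk]) <;> omega)]
          refine not_subset_FS (⟨3, by omega⟩ : Fin (2*k+1)) ?_ ?_ <;>
            (try simp [Fin.val_mk]) <;> omega
        apply domGameVal_true_le H hu
        rw [nbhdU hk (v := ⟨3, by omega⟩) (by (try simp [Fin.val_mk]) <;> omega),
          union_FS_univ (by intro x hx; omega), domGameVal_univ]
        omega
    · -- lower bound: Staller plays b = 1
      have hb : ¬ closedNbhd H (⟨1, by omega⟩ : Fin (2*k+1)) ⊆ ∅ :=
        not_nbhd_subset_empty H _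
      apply le_domGameVal_false H hb
      rw [empty_union', nbhd1 hk (v := ⟨1, by omega⟩) rfl]
      refine le_domGameVal_true H (FS_ne_univ (⟨0, by omega⟩ : Fin (2*k+1)) ?_) ?_
      · (try simp [Fin.val_mk]) <;> omega
      intro w hw
      rcases hcase w with g0 | g1 | g2 | gU | gW
      · rw [nbhd0 hk g0, union_FS (r := fun x => x ≠ 2) (by intro x hx; omega)]
        refine one_le_domGameVal H false (FS_ne_univ (⟨2, by omega⟩ : Fin (2*k+1)) ?_)
        (try simp [Fin.val_mk]) <;> omega
      · rw [nbhd1 hk g1] at hw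
        exact absurd (FS_subset (fun x _ h => by omega)) hw
      · rw [nbhd2 hk g2, union_FS (r := fun x => x ≠ 0) (by intro x hx; omega)]
        refine one_le_domGameVal H false (FS_ne_univ (⟨0, by omega⟩ : Fin (2*k+1)) ?_)
        (try simp [Fin.val_mk]) <;> omega
      · rw [nbhdU hk gU, union_FS (r := fun x => x ≠ 2) (by intro x hx; omega)]
        refine one_le_domGameVal H false (FS_ne_univ (⟨2, by omega⟩ : Fin (2*k+1)) ?_)
        (try simp [Fin.val_mk]) <;> omega
      · rw [nbhdW hk gW, union_FS (r := fun x => x ≠ 0) (by intro x hx; omega)]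
        refine one_le_domGameVal H false (FS_ne_univ (⟨0, by omega⟩ : Fin (2*k+1)) ?_)
        (try simp [Fin.val_mk]) <;> omega
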